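/- For |q| < 1, the double sum ∑_{n₁,n₂≥0} q^{n₁+n₂+n₁n₂} / ((q;q)_{n₁} (q;q)_{n₂}²) equals 1/(q;q)_∞². -/

import Mathlib

/-- The finite q-Pochhammer symbol `(q;q)_n`. -/
noncomputable def qPoch (q : ℂ) (n : ℕ) : ℂ := ∏ i ∈ Finset.range n, (1 - q ^ (i + 1))

/-- The infinite q-Pochhammer symbol `(q;q)_∞`. -/
noncomputable def qPochInf (q : ℂ) : ℂ := ∏' i : ℕ, (1 - q ^ (i + 1))

/-- The infinite q-Pochhammer symbol `(a;q)_∞ = ∏_{i≥0} (1 - a q^i)`. -/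
noncomputable def pochInf (a q : ℂ) : ℂ := ∏' i : ℕ, (1 - a * q ^ i)

open Finset Filter Topology

section Real

variable {r : ℝ}

lemma my_summable_log (hr0 : 0 ≤ r) (hr : r < 1) :
    Summable fun i : ℕ => Real.log (1 - r ^ (i + 1)) := by
  apply Summable.of_norm_bounded (g := fun i => (1 - r)⁻¹ * r ^ (i + 1))
  · exact ((summable_geometric_of_lt_one hr0 hr).comp_injective (add_left_injective 1)).mul_left _
  · intro i
    set x := r ^ (i + 1) with hxdef
    have hx0 : 0 ≤ x := pow_nonneg hr0 _
    have hxr : x ≤ r := by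
      calc x ≤ r ^ 1 := pow_le_pow_of_le_one hr0 hr.le (by omega)
      _ = r := pow_one r
    have hx1 : x < 1 := lt_of_le_of_lt hxr hr
    have h1x : 0 < 1 - x := by linarith
    have hlog0 : Real.log (1 - x) ≤ 0 := Real.log_nonpos (by linarith) (by linarith)
    have hb : -Real.log (1 - x) ≤ (1 - x)⁻¹ - 1 := by
      have := Real.log_le_sub_one_of_pos (inv_pos.2 h1x)
      rwa [Real.log_inv] at this
    have h1r : 0 < 1 - r := by linarith
    have hb2 : (1 - x)⁻¹ - 1 ≤ x / (1 - r) := by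
      have e : (1 - x)⁻¹ - 1 = x / (1 - x) := by field_simp; ring
      rw [e]
      exact div_le_div_of_nonneg_left hx0 h1r (by linarith)
    rw [Real.norm_eq_abs, abs_of_nonpos hlog0, ← div_eq_inv_mul]
    exact le_trans hb hb2

lemma my_exp_tsum (hr0 : 0 ≤ r) (hr : r < 1) :
    Real.exp (∑' i : ℕ, Real.log (1 - r ^ (i + 1))) = ∏' i : ℕ, (1 - r ^ (i + 1)) := by
  have := Real.rexp_tsum_eq_tprod (f := fun i => 1 - r ^ (i + 1))
    (fun i => by
      have h : r ^ (i + 1) < 1 := pow_lt_one₀ hr0 hr (by omega)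
      show (0:ℝ) < 1 - r ^ (i + 1); linarith)
    (my_summable_log hr0 hr)
  simpa using this

lemma my_tprod_pos (hr0 : 0 ≤ r) (hr : r < 1) :
    0 < ∏' i : ℕ, (1 - r ^ (i + 1)) := by
  rw [← my_exp_tsum hr0 hr]
  exact Real.exp_pos _

/-- partial products dominate the full product -/
lemma my_tprod_le_partial (hr0 : 0 ≤ r) (hr : r < 1) (n : ℕ) :
    (∏' i : ℕ, (1 - r ^ (i + 1))) ≤ ∏ i ∈ range n, (1 - r ^ (i + 1)) := by
  have hpos : ∀ i : ℕ, (0:ℝ) < 1 - r ^ (i + 1) := fun i => by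
    have h : r ^ (i + 1) < 1 := pow_lt_one₀ hr0 hr (by omega); linarith
  have hsplit := Summable.sum_add_tsum_nat_add (f := fun i => Real.log (1 - r ^ (i + 1))) n
    (my_summable_log hr0 hr)
  rw [← my_exp_tsum hr0 hr, ← hsplit, Real.exp_add, Real.exp_sum]
  have h1 : ∀ i ∈ range n, Real.exp (Real.log (1 - r ^ (i + 1))) = 1 - r ^ (i + 1) :=
    fun i _ => Real.exp_log (hpos i)
  rw [Finset.prod_congr rfl h1]
  have h2 : Real.exp (∑' i : ℕ, Real.log (1 - r ^ (i + n + 1))) ≤ 1 := by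
    rw [Real.exp_le_one_iff]
    apply tsum_nonpos
    intro i
    apply Real.log_nonpos (by have := hpos (i + n); linarith)
    have : 0 ≤ r ^ (i + n + 1) := pow_nonneg hr0 _
    linarith
  have hP : (0:ℝ) ≤ ∏ i ∈ range n, (1 - r ^ (i + 1)) :=
    Finset.prod_nonneg fun i _ => (hpos i).le
  calc (∏ i ∈ range n, (1 - r ^ (i + 1))) * Real.exp (∑' i : ℕ, Real.log (1 - r ^ (i + n + 1)))
      ≤ (∏ i ∈ range n, (1 - r ^ (i + 1))) * 1 := mul_le_mul_of_nonneg_left h2 hP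
    _ = ∏ i ∈ range n, (1 - r ^ (i + 1)) := mul_one _

end Real

section Complex

variable {q z : ℂ}

/-- The positive constant `C = (|q|;|q|)_∞`. -/
noncomputable def qC (q : ℂ) : ℝ := ∏' i : ℕ, (1 - ‖q‖ ^ (i + 1))

lemma qC_pos (hq : ‖q‖ < 1) : 0 < qC q := my_tprod_pos (norm_nonneg q) hq

lemma norm_qPoch_ge (hq : ‖q‖ < 1) (n : ℕ) : qC q ≤ ‖qPoch q n‖ := by
  refine (my_tprod_le_partial (norm_nonneg q) hq n).trans ?_
  rw [qPoch, norm_prod]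
  apply Finset.prod_le_prod
  · intro i _
    have : ‖q‖ ^ (i + 1) < 1 := pow_lt_one₀ (norm_nonneg q) hq (by omega)
    linarith
  · intro i _
    calc 1 - ‖q‖ ^ (i + 1) = ‖(1:ℂ)‖ - ‖q ^ (i + 1)‖ := by simp
    _ ≤ ‖1 - q ^ (i + 1)‖ := norm_sub_norm_le _ _

lemma qPoch_ne_zero (hq : ‖q‖ < 1) (n : ℕ) : qPoch q n ≠ 0 := by
  intro h
  have := norm_qPoch_ge hq n
  rw [h, norm_zero] at this
  exact absurd (qC_pos hq) (by linarith)

lemma qPoch_succ (q : ℂ) (n : ℕ) : qPoch q (n + 1) = qPoch q n * (1 - q ^ (n + 1)) := by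
  rw [qPoch, qPoch, Finset.prod_range_succ]

lemma summable_euler (hq : ‖q‖ < 1) (hz : ‖z‖ < 1) :
    Summable fun n : ℕ => z ^ n / qPoch q n := by
  apply Summable.of_norm_bounded (g := fun n => (qC q)⁻¹ * ‖z‖ ^ n)
  · exact (summable_geometric_of_lt_one (norm_nonneg z) hz).mul_left _
  · intro n
    rw [norm_div, norm_pow, div_eq_inv_mul]
    apply mul_le_mul_of_nonneg_right _ (pow_nonneg (norm_nonneg z) n)
    apply inv_anti₀ (qC_pos hq) (norm_qPoch_ge hq n)

lemma euler_rec (hq : ‖q‖ < 1) (hz : ‖z‖ < 1) :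
    (1 - z) * ∑' n : ℕ, z ^ n / qPoch q n = ∑' n : ℕ, (q * z) ^ n / qPoch q n := by
  have hqz : ‖q * z‖ < 1 := by
    rw [norm_mul]
    calc ‖q‖ * ‖z‖ ≤ 1 * ‖z‖ := by
          apply mul_le_mul_of_nonneg_right hq.le (norm_nonneg z)
    _ = ‖z‖ := one_mul _
    _ < 1 := hz
  have hf : Summable fun n : ℕ => z ^ n / qPoch q n := summable_euler hq hz
  have hg : Summable fun n : ℕ => (q * z) ^ n / qPoch q n := summable_euler hq hqz
  have hf1 : Summable fun n : ℕ => z ^ (n + 1) / qPoch q (n + 1) := by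
    have := (summable_nat_add_iff (f := fun n => z ^ n / qPoch q n) 1).2 hf
    exact this
  have hf2 : Summable fun n : ℕ => z ^ (n + 1) / qPoch q n := by
    have := hf.mul_left z
    refine this.congr fun n => ?_
    rw [pow_succ']
    ring
  have h0 : qPoch q 0 = 1 := by simp [qPoch]
  have hS : (∑' n : ℕ, z ^ n / qPoch q n)
      = 1 + ∑' n : ℕ, z ^ (n + 1) / qPoch q (n + 1) := by
    rw [Summable.tsum_eq_zero_add hf, h0]
    simp
  have hzS : z * (∑' n : ℕ, z ^ n / qPoch q n) = ∑' n : ℕ, z ^ (n + 1) / qPoch q n := by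
    rw [← tsum_mul_left]
    refine tsum_congr fun n => ?_
    rw [pow_succ']
    ring
  have hterm : ∀ n : ℕ, z ^ (n + 1) / qPoch q (n + 1) - z ^ (n + 1) / qPoch q n
      = (q * z) ^ (n + 1) / qPoch q (n + 1) := by
    intro n
    have ha : qPoch q n ≠ 0 := qPoch_ne_zero hq n
    have hb : qPoch q (n + 1) ≠ 0 := qPoch_ne_zero hq (n + 1)
    rw [qPoch_succ] at hb ⊢
    have hb' : (1 : ℂ) - q ^ (n + 1) ≠ 0 := by
      intro h
      apply hb
      rw [h, mul_zero]
    field_simp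
    ring
  have hSg : (∑' n : ℕ, (q * z) ^ n / qPoch q n)
      = 1 + ∑' n : ℕ, (q * z) ^ (n + 1) / qPoch q (n + 1) := by
    rw [Summable.tsum_eq_zero_add hg, h0]
    simp
  rw [sub_mul, one_mul, hzS, hS, hSg, add_sub_assoc, ← Summable.tsum_sub hf1 hf2]
  congr 1
  exact tsum_congr hterm

lemma norm_pow_mul_le (hq : ‖q‖ < 1) (hz : ‖z‖ < 1) (N : ℕ) : ‖q ^ N * z‖ ≤ ‖z‖ := by
  rw [norm_mul, norm_pow]
  calc ‖q‖ ^ N * ‖z‖ ≤ 1 * ‖z‖ := by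
        apply mul_le_mul_of_nonneg_right (pow_le_one₀ (norm_nonneg q) hq.le) (norm_nonneg z)
  _ = ‖z‖ := one_mul _

lemma euler_iter (hq : ‖q‖ < 1) (hz : ‖z‖ < 1) (N : ℕ) :
    (∑' n : ℕ, z ^ n / qPoch q n) * ∏ i ∈ range N, (1 - z * q ^ i)
      = ∑' n : ℕ, (q ^ N * z) ^ n / qPoch q n := by
  induction N with
  | zero => simp
  | succ N ih =>
      rw [Finset.prod_range_succ, ← mul_assoc, ih]
      have hw : ‖q ^ N * z‖ < 1 := lt_of_le_of_lt (norm_pow_mul_le hq hz N) hz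
      have := euler_rec hq hw
      calc (∑' n : ℕ, (q ^ N * z) ^ n / qPoch q n) * (1 - z * q ^ N)
          = (1 - q ^ N * z) * ∑' n : ℕ, (q ^ N * z) ^ n / qPoch q n := by ring
        _ = ∑' n : ℕ, (q * (q ^ N * z)) ^ n / qPoch q n := euler_rec hq hw
        _ = ∑' n : ℕ, (q ^ (N + 1) * z) ^ n / qPoch q n := by
            refine tsum_congr fun n => ?_
            rw [show q * (q ^ N * z) = q ^ (N + 1) * z by rw [pow_succ]; ring]

lemma poch_factor_ne_zero (hq : ‖q‖ < 1) (hz : ‖z‖ < 1) (i : ℕ) : (1 : ℂ) - z * q ^ i ≠ 0 := by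
  intro h
  have h1 : (1 : ℂ) = z * q ^ i := by linear_combination h
  have : (1:ℝ) ≤ ‖z‖ := by
    calc (1:ℝ) = ‖(1:ℂ)‖ := by simp
    _ = ‖z * q ^ i‖ := by rw [h1]
    _ = ‖z‖ * ‖q‖ ^ i := by rw [norm_mul, norm_pow]
    _ ≤ ‖z‖ * 1 := by
        apply mul_le_mul_of_nonneg_left (pow_le_one₀ (norm_nonneg q) hq.le) (norm_nonneg z)
    _ = ‖z‖ := mul_one _
  linarith

lemma summable_log_complex (hq : ‖q‖ < 1) (hz : ‖z‖ < 1) :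
    Summable fun i : ℕ => Complex.log (1 - z * q ^ i) := by
  apply Summable.of_norm_bounded_eventually (g := fun i => 3 / 2 * (‖z‖ * ‖q‖ ^ i))
  · exact ((summable_geometric_of_lt_one (norm_nonneg q) hq).mul_left ‖z‖).mul_left _
  · rw [Nat.cofinite_eq_atTop]
    have htend : Tendsto (fun i : ℕ => ‖z‖ * ‖q‖ ^ i) atTop (𝓝 0) := by
      simpa using (tendsto_pow_atTop_nhds_zero_of_lt_one (norm_nonneg q) hq).const_mul ‖z‖
    filter_upwards [htend.eventually_le_const (by norm_num : (0:ℝ) < 1/2)] with i hi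
    have hnorm : ‖-(z * q ^ i)‖ ≤ 1 / 2 := by
      rw [norm_neg, norm_mul, norm_pow]; exact hi
    have := Complex.norm_log_one_add_half_le_self hnorm
    rw [show (1 : ℂ) + -(z * q ^ i) = 1 - z * q ^ i by ring] at this
    refine this.trans ?_
    rw [norm_neg, norm_mul, norm_pow]

lemma multipliable_poch (hq : ‖q‖ < 1) (hz : ‖z‖ < 1) :
    Multipliable fun i : ℕ => (1 : ℂ) - z * q ^ i :=
  Complex.multipliable_of_summable_log (summable_log_complex hq hz)

lemma pochInf_ne_zero (hq : ‖q‖ < 1) (hz : ‖z‖ < 1) : pochInf z q ≠ 0 := by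
  have := Complex.cexp_tsum_eq_tprod (f := fun i => 1 - z * q ^ i)
    (fun i => poch_factor_ne_zero hq hz i) (summable_log_complex hq hz)
  rw [pochInf, ← this]
  exact Complex.exp_ne_zero _

lemma sum_sub_one_bound (hq : ‖q‖ < 1) (hz : ‖z‖ < 1) {w : ℂ} (hw : ‖w‖ ≤ ‖z‖) :
    ‖(∑' n : ℕ, w ^ n / qPoch q n) - 1‖ ≤ ‖w‖ * ((qC q)⁻¹ * (1 - ‖z‖)⁻¹) := by
  have hw1 : ‖w‖ < 1 := lt_of_le_of_lt hw hz
  have hfw : Summable fun n : ℕ => w ^ n / qPoch q n := summable_euler hq hw1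
  have h0 : qPoch q 0 = 1 := by simp [qPoch]
  have hS : (∑' n : ℕ, w ^ n / qPoch q n) - 1 = ∑' n : ℕ, w ^ (n + 1) / qPoch q (n + 1) := by
    rw [Summable.tsum_eq_zero_add hfw, h0]
    simp
  rw [hS]
  have hsum1 : Summable fun n : ℕ => ‖w ^ (n + 1) / qPoch q (n + 1)‖ := by
    have := (summable_nat_add_iff (f := fun n => w ^ n / qPoch q n) 1).2 hfw
    exact this.norm
  refine (norm_tsum_le_tsum_norm hsum1).trans ?_
  have hbound : ∀ n : ℕ, ‖w ^ (n + 1) / qPoch q (n + 1)‖ ≤ ‖w‖ * ((qC q)⁻¹ * ‖z‖ ^ n) := by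
    intro n
    rw [norm_div, norm_pow, pow_succ']
    have h1 : ‖w‖ * ‖w‖ ^ n / ‖qPoch q (n + 1)‖ ≤ ‖w‖ * ‖w‖ ^ n / qC q := by
      exact div_le_div_of_nonneg_left (by positivity) (qC_pos hq) (norm_qPoch_ge hq (n + 1))
    refine h1.trans ?_
    rw [div_eq_mul_inv]
    have h2 : ‖w‖ ^ n ≤ ‖z‖ ^ n := pow_le_pow_left₀ (norm_nonneg w) hw n
    calc ‖w‖ * ‖w‖ ^ n * (qC q)⁻¹ ≤ ‖w‖ * ‖z‖ ^ n * (qC q)⁻¹ := by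
          apply mul_le_mul_of_nonneg_right _ (inv_nonneg.2 (qC_pos hq).le)
          exact mul_le_mul_of_nonneg_left h2 (norm_nonneg w)
      _ = ‖w‖ * ((qC q)⁻¹ * ‖z‖ ^ n) := by ring
  have hsumg : Summable fun n : ℕ => ‖w‖ * ((qC q)⁻¹ * ‖z‖ ^ n) :=
    (((summable_geometric_of_lt_one (norm_nonneg z) hz).mul_left _).mul_left _)
  refine (Summable.tsum_le_tsum hbound hsum1 hsumg).trans ?_
  rw [tsum_mul_left, tsum_mul_left, tsum_geometric_of_lt_one (norm_nonneg z) hz]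

lemma euler_prod (hq : ‖q‖ < 1) (hz : ‖z‖ < 1) :
    (∑' n : ℕ, z ^ n / qPoch q n) * pochInf z q = 1 := by
  have hmult := multipliable_poch hq hz
  have h1 : Tendsto (fun N : ℕ => (∑' n : ℕ, z ^ n / qPoch q n) * ∏ i ∈ range N, (1 - z * q ^ i))
      atTop (𝓝 ((∑' n : ℕ, z ^ n / qPoch q n) * pochInf z q)) :=
    (hmult.hasProd.tendsto_prod_nat).const_mul _
  have h1' : Tendsto (fun N : ℕ => ∑' n : ℕ, (q ^ N * z) ^ n / qPoch q n)
      atTop (𝓝 ((∑' n : ℕ, z ^ n / qPoch q n) * pochInf z q)) := by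
    refine h1.congr fun N => euler_iter hq hz N
  have h2 : Tendsto (fun N : ℕ => ∑' n : ℕ, (q ^ N * z) ^ n / qPoch q n) atTop (𝓝 1) := by
    rw [← tendsto_sub_nhds_zero_iff]
    apply squeeze_zero_norm (f := fun N => (∑' n : ℕ, (q ^ N * z) ^ n / qPoch q n) - 1)
      (a := fun N => ‖q ^ N * z‖ * ((qC q)⁻¹ * (1 - ‖z‖)⁻¹))
    · intro N
      exact sum_sub_one_bound hq hz (norm_pow_mul_le hq hz N)
    · have : Tendsto (fun N : ℕ => ‖q‖ ^ N * ‖z‖ * ((qC q)⁻¹ * (1 - ‖z‖)⁻¹)) atTop (𝓝 0) := by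
        have h := (((tendsto_pow_atTop_nhds_zero_of_lt_one (norm_nonneg q) hq).mul_const
          ‖z‖).mul_const ((qC q)⁻¹ * (1 - ‖z‖)⁻¹))
        simpa using h
      refine this.congr fun N => by rw [norm_mul, norm_pow]
  exact tendsto_nhds_unique h1' h2

lemma euler (hq : ‖q‖ < 1) (hz : ‖z‖ < 1) :
    (∑' n : ℕ, z ^ n / qPoch q n) = 1 / pochInf z q := by
  have h := euler_prod hq hz
  have hne := pochInf_ne_zero hq hz
  field_simp
  exact h

end Complex

section Main

variable {q : ℂ}

lemma qfactor_ne_zero (hq : ‖q‖ < 1) (i : ℕ) : (1 : ℂ) - q ^ (i + 1) ≠ 0 := by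
  have h := poch_factor_ne_zero hq hq i
  rwa [show q * q ^ i = q ^ (i + 1) by rw [pow_succ']] at h

lemma summable_log_q (hq : ‖q‖ < 1) :
    Summable fun i : ℕ => Complex.log (1 - q ^ (i + 1)) := by
  refine (summable_log_complex hq hq).congr fun i => ?_
  rw [show q * q ^ i = q ^ (i + 1) by rw [pow_succ']]

lemma qPochInf_eq_exp (hq : ‖q‖ < 1) :
    qPochInf q = Complex.exp (∑' i : ℕ, Complex.log (1 - q ^ (i + 1))) := by
  have := Complex.cexp_tsum_eq_tprod (f := fun i => 1 - q ^ (i + 1))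
    (fun i => qfactor_ne_zero hq i) (summable_log_q hq)
  rw [qPochInf, ← this]

lemma key_split (hq : ‖q‖ < 1) (m : ℕ) :
    qPoch q m * pochInf (q ^ (m + 1)) q = qPochInf q := by
  have hterm : ∀ i : ℕ, (1 : ℂ) - q ^ (m + 1) * q ^ i = 1 - q ^ (i + m + 1) := by
    intro i
    rw [← pow_add]
    ring_nf
  have hsumtail : Summable fun i : ℕ => Complex.log (1 - q ^ (i + m + 1)) := by
    have h := (summable_nat_add_iff (f := fun i => Complex.log (1 - q ^ (i + 1))) m).2
      (summable_log_q hq)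
    exact h
  have hpoch : pochInf (q ^ (m + 1)) q
      = Complex.exp (∑' i : ℕ, Complex.log (1 - q ^ (i + m + 1))) := by
    have := Complex.cexp_tsum_eq_tprod (f := fun i => 1 - q ^ (i + m + 1))
      (fun i => qfactor_ne_zero hq (i + m)) hsumtail
    rw [pochInf]
    calc (∏' i : ℕ, (1 - q ^ (m + 1) * q ^ i)) = ∏' i : ℕ, (1 - q ^ (i + m + 1)) :=
          tprod_congr fun i => hterm i
      _ = Complex.exp (∑' i : ℕ, Complex.log (1 - q ^ (i + m + 1))) := this.symm
  have hfin : qPoch q m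
      = Complex.exp (∑ i ∈ range m, Complex.log (1 - q ^ (i + 1))) := by
    rw [Complex.exp_sum, qPoch]
    exact Finset.prod_congr rfl fun i _ => (Complex.exp_log (qfactor_ne_zero hq i)).symm
  have hsplit := Summable.sum_add_tsum_nat_add (f := fun i => Complex.log (1 - q ^ (i + 1))) m
    (summable_log_q hq)
  rw [hpoch, hfin, ← Complex.exp_add, hsplit, ← qPochInf_eq_exp hq]

lemma qPochInf_eq_pochInf (q : ℂ) : qPochInf q = pochInf q q := by
  rw [qPochInf, pochInf]
  exact tprod_congr fun i => by rw [show q * q ^ i = q ^ (i + 1) by rw [pow_succ']]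

end Main

theorem stmt1 (q : ℂ) (hq : ‖q‖ < 1) :
    ∑' n : ℕ × ℕ, q ^ (n.1 + n.2 + n.1 * n.2) / (qPoch q n.1 * qPoch q n.2 ^ 2)
      = 1 / qPochInf q ^ 2 := by
  have hq0 : (0:ℝ) ≤ ‖q‖ := norm_nonneg q
  have hq1 : ∀ m : ℕ, ‖q ^ (m + 1)‖ < 1 := fun m => by
    rw [norm_pow]; exact pow_lt_one₀ hq0 hq (by omega)
  have hqPne : qPochInf q ≠ 0 := by
    rw [qPochInf_eq_pochInf]; exact pochInf_ne_zero hq hq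
  have hCpos := qC_pos hq
  set g : ℕ × ℕ → ℂ :=
    fun p => q ^ (p.1 + p.2 + p.1 * p.2) / (qPoch q p.1 * qPoch q p.2 ^ 2) with hg
  -- summability of the swapped family
  have hsum : Summable fun p : ℕ × ℕ => g (p.2, p.1) := by
    apply Summable.of_norm_bounded
      (g := fun p : ℕ × ℕ => ((qC q)⁻¹ ^ 2 * ‖q‖ ^ p.1) * ((qC q)⁻¹ * ‖q‖ ^ p.2))
    · apply Summable.mul_of_nonneg (f := fun n : ℕ => (qC q)⁻¹ ^ 2 * ‖q‖ ^ n)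
        (g := fun n : ℕ => (qC q)⁻¹ * ‖q‖ ^ n)
      · exact (summable_geometric_of_lt_one hq0 hq).mul_left _
      · exact (summable_geometric_of_lt_one hq0 hq).mul_left _
      · intro n; positivity
      · intro n; positivity
    · rintro ⟨m, n⟩
      simp only [hg]
      rw [norm_div, norm_mul, norm_pow, norm_pow]
      have hnum : ‖q‖ ^ (n + m + n * m) ≤ ‖q‖ ^ n * ‖q‖ ^ m := by
        rw [← pow_add]
        exact pow_le_pow_of_le_one hq0 hq.le (by nlinarith)
      have hden : (qC q) * (qC q) ^ 2 ≤ ‖qPoch q n‖ * ‖qPoch q m‖ ^ 2 := by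
        apply mul_le_mul (norm_qPoch_ge hq n) _ (by positivity) (norm_nonneg _)
        exact pow_le_pow_left₀ hCpos.le (norm_qPoch_ge hq m) 2
      have hdpos : (0:ℝ) < qC q * qC q ^ 2 := by positivity
      calc ‖q‖ ^ (n + m + n * m) / (‖qPoch q n‖ * ‖qPoch q m‖ ^ 2)
          ≤ (‖q‖ ^ n * ‖q‖ ^ m) / (qC q * qC q ^ 2) := by
            apply div_le_div₀ (by positivity) hnum hdpos hden
        _ = (qC q)⁻¹ ^ 2 * ‖q‖ ^ m * ((qC q)⁻¹ * ‖q‖ ^ n) := by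
            field_simp
  -- swap the order of summation
  have hswap : (∑' p : ℕ × ℕ, g p) = ∑' p : ℕ × ℕ, g (p.2, p.1) := by
    rw [← (Equiv.prodComm ℕ ℕ).tsum_eq (fun p => g (p.2, p.1))]
    simp [Equiv.prodComm]
  rw [show (∑' n : ℕ × ℕ, q ^ (n.1 + n.2 + n.1 * n.2) / (qPoch q n.1 * qPoch q n.2 ^ 2))
      = ∑' p : ℕ × ℕ, g p from rfl, hswap, Summable.tsum_prod hsum]
  -- evaluate the inner sums
  have hinner : ∀ m : ℕ, (∑' n : ℕ, g (n, m)) = 1 / qPochInf q * (q ^ m / qPoch q m) := by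
    intro m
    have hterm : ∀ n : ℕ, g (n, m)
        = q ^ m / qPoch q m ^ 2 * ((q ^ (m + 1)) ^ n / qPoch q n) := by
      intro n
      simp only [hg]
      rw [← pow_mul, div_mul_div_comm, ← pow_add]
      rw [show m + (m + 1) * n = n + m + n * m by ring]
      rw [mul_comm (qPoch q n) (qPoch q m ^ 2)]
    rw [tsum_congr hterm, tsum_mul_left, euler hq (hq1 m)]
    have hkey := key_split hq m
    have hp1 : qPoch q m ≠ 0 := qPoch_ne_zero hq m
    have hp2 : pochInf (q ^ (m + 1)) q ≠ 0 := pochInf_ne_zero hq (hq1 m)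
    rw [div_mul_div_comm, div_mul_div_comm, mul_one, one_mul]
    have hden : qPoch q m ^ 2 * pochInf (q ^ (m + 1)) q = qPochInf q * qPoch q m := by
      linear_combination qPoch q m * hkey
    rw [hden]
  rw [tsum_congr hinner, tsum_mul_left]
  have hS : (∑' m : ℕ, q ^ m / qPoch q m) = 1 / qPochInf q := by
    rw [euler hq hq, qPochInf_eq_pochInf]
  rw [hS]
  field_simp
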